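/- For any nonnegative integer k, ∑_{j=0}^{k-1} (1/(j+1/6) + 1/(j+5/6)) = 6*H_{6k} - 3*H_{3k} - 2*H_{2k} + H_k, where H_n is the n-th harmonic number. -/
import Mathlib

lemma icc_harmonic (n : ℕ) :
    ∑ i ∈ Finset.Icc 1 n, (1 : ℚ) / i = ∑ i ∈ Finset.range n, (1 : ℚ) / (i + 1) := by
  induction n with
  | zero => simp
  | succ m ih =>
    rw [Finset.sum_Icc_succ_top (by omega), ih, Finset.sum_range_succ]
    push_cast; ring

theorem sixth_harmonic_sum (k : ℕ) :
    ∑ j ∈ Finset.range k, ((1 : ℚ) / (j + 1/6) + 1 / (j + 5/6))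
    = 6 * (∑ i ∈ Finset.Icc 1 (6 * k), (1 : ℚ) / i)
      - 3 * (∑ i ∈ Finset.Icc 1 (3 * k), (1 : ℚ) / i)
      - 2 * (∑ i ∈ Finset.Icc 1 (2 * k), (1 : ℚ) / i)
      + (∑ i ∈ Finset.Icc 1 k, (1 : ℚ) / i) := by
  simp only [icc_harmonic]
  induction k with
  | zero => simp
  | succ n ih =>
    have h6 : 6 * (n + 1) = 6 * n + 1 + 1 + 1 + 1 + 1 + 1 := by ring
    have h3 : 3 * (n + 1) = 3 * n + 1 + 1 + 1 := by ring
    have h2 : 2 * (n + 1) = 2 * n + 1 + 1 := by ring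
    rw [h6, h3, h2]
    simp only [Finset.sum_range_succ, ih]
    push_cast
    field_simp
    ring
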